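/- If P is a classical 1-absorbing prime submodule of an A-module M which is not classical prime, then A is a local ring whose maximal ideal 𝔮 satisfies 𝔮² ⊆ (P :_A m) for some m ∈ M \ P. -/

import Mathlib

/-- A proper submodule is classical 1-absorbing prime. -/
def IsCl1AbsPrime {A M : Type*} [CommRing A] [AddCommGroup M] [Module A M]
    (P : Submodule A M) : Prop :=
  P ≠ ⊤ ∧ ∀ (a b c : A) (m : M), ¬IsUnit a → ¬IsUnit b → ¬IsUnit c →
    (a * b * c) • m ∈ P → (a * b) • m ∈ P ∨ c • m ∈ P


/-- A proper submodule is classical prime. -/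
def IsClPrime {A M : Type*} [CommRing A] [AddCommGroup M] [Module A M]
    (P : Submodule A M) : Prop :=
  P ≠ ⊤ ∧ ∀ (a b : A) (m : M), (a * b) • m ∈ P → a • m ∈ P ∨ b • m ∈ P

theorem stmt_18 {A M : Type*} [CommRing A] [AddCommGroup M] [Module A M]
    (P : Submodule A M) (h : IsCl1AbsPrime P) (hnp : ¬IsClPrime P) :
    ∃ q : Ideal A, q.IsMaximal ∧ (∀ q' : Ideal A, q'.IsMaximal → q' = q) ∧
      ∃ m : M, m ∉ P ∧ q ^ 2 ≤ P.colon (Submodule.span A {m}) := by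
  obtain ⟨hP, habs⟩ := h
  rw [IsClPrime, not_and] at hnp
  push_neg at hnp
  obtain ⟨a, b, m, hab, ha, hb⟩ := hnp hP
  -- a and b are nonunits
  have hm : m ∉ P := fun hm => ha (P.smul_mem a hm)
  have hna : ¬IsUnit a := by
    intro hu
    apply hb
    have := P.smul_mem (↑hu.unit⁻¹ : A) hab
    rwa [smul_smul, ← mul_assoc, IsUnit.val_inv_mul, one_mul] at this
  have hnb : ¬IsUnit b := by
    intro hu
    apply ha
    have := P.smul_mem (↑hu.unit⁻¹ : A) hab
    rwa [smul_smul, mul_comm a b, ← mul_assoc, IsUnit.val_inv_mul, one_mul] at this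
  -- key : for any nonunit c, (c*a) • m ∈ P
  have key1 : ∀ c : A, ¬IsUnit c → (c * a) • m ∈ P := by
    intro c hc
    rcases habs c a b m hc hna hnb
        (by rw [mul_assoc, mul_smul]; exact P.smul_mem c hab) with h1 | h1
    · exact h1
    · exact absurd h1 hb
  -- key2 : for any nonunits c d, (c*d) • m ∈ P
  have key2 : ∀ c d : A, ¬IsUnit c → ¬IsUnit d → (c * d) • m ∈ P := by
    intro c d hc hd
    have hda : (c * d * a) • m ∈ P := by
      rw [mul_assoc, mul_smul]
      exact P.smul_mem c (key1 d hd)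
    rcases habs c d a m hc hd hna hda with h1 | h1
    · exact h1
    · exact absurd h1 ha
  -- A is nontrivial
  have : Nontrivial A := by
    by_contra hnt
    rw [not_nontrivial_iff_subsingleton] at hnt
    exact hP (Subsingleton.elim _ _)
  -- A is local
  have hloc : IsLocalRing A := by
    apply IsLocalRing.of_nonunits_add
    intro c d hc hd hcd
    apply hm
    rcases hcd with ⟨u, hu⟩
    have h1 := key2 c c hc hc
    have h2 := key2 c d hc hd
    have h3 := key2 d c hd hc
    have h4 := key2 d d hd hd
    have hsum : ((c + d) * (c + d)) • m ∈ P := by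
      have : (c + d) * (c + d) = c * c + c * d + (d * c + d * d) := by ring
      rw [this, add_smul, add_smul, add_smul]
      exact P.add_mem (P.add_mem h1 h2) (P.add_mem h3 h4)
    rw [← hu] at hsum
    have := P.smul_mem ((↑u⁻¹ : A) * ↑u⁻¹) hsum
    rwa [smul_smul, show ((↑u⁻¹ : A) * ↑u⁻¹) * ((u : A) * u)
      = ((↑u⁻¹ : A) * u) * ((↑u⁻¹ : A) * u) by ring, u.inv_mul, one_mul, one_smul] at this
  refine ⟨IsLocalRing.maximalIdeal A, IsLocalRing.maximalIdeal.isMaximal A,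
    fun q' hq' => IsLocalRing.eq_maximalIdeal hq', m, hm, ?_⟩
  rw [pow_two]
  intro x hx
  rw [Submodule.mem_colon_span_singleton]
  refine Submodule.mul_induction_on hx (fun c hc d hd => ?_) (fun x y hx hy => ?_)
  · exact key2 c d (IsLocalRing.mem_maximalIdeal c |>.mp hc)
      (IsLocalRing.mem_maximalIdeal d |>.mp hd)
  · rw [add_smul]; exact P.add_mem hx hy
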